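/- arXiv:1008.3170 — 4 statements merged into one kernel-verified Lean document; each statement's English description precedes it below -/
import Mathlib

section
/- Let L : ℝ^m × ℝ^N × (ℝ^N)^m → ℝ, written L(b,y,w), be continuously differentiable, and fix b ∈ ℝ^m, y ∈ ℝ^N, v ∈ (ℝ^N)^m. Define f(J) := L(b, y, v·J⁻¹)·det J on the open set of invertible m×m matrices J, where (v·J⁻¹)^A_c = Σ_μ v^A_μ (J⁻¹)^μ_c. Then f is differentiable and its partial derivative with respect to the matrix entry J^a_μ equals ∂f/∂J^a_μ (J) = Σ_c [ L(b,y,w)·δ^c_a − Σ_A (∂L/∂w^A_c)(b,y,w)·w^A_a ] · (J⁻¹)^μ_c · det J, where w := v·J⁻¹. -/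
noncomputable section

section Aux

attribute [local instance] Matrix.linftyOpNormedRing Matrix.linftyOpNormedAlgebra

/-- determinant as a continuous multilinear map in the rows -/
def detCM (m : ℕ) : ContinuousMultilinearMap ℝ (fun _ : Fin m => (Fin m → ℝ)) ℝ where
  toMultilinearMap :=
    (Matrix.detRowAlternating : (Fin m → ℝ) [⋀^Fin m]→ₗ[ℝ] ℝ).toMultilinearMap
  cont := show Continuous fun K : Fin m → Fin m → ℝ => (Matrix.of K).det from
    continuous_id.matrix_det

theorem detCM_apply {m : ℕ} (K : Fin m → Fin m → ℝ) : detCM m K = (Matrix.of K).det := rfl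

/-- for `f(J) := L(b, y, v·J⁻¹)·det J` and invertible `J`, `f` is
differentiable at `J` and `∂f/∂J^a_μ = Σ_c [L δ^c_a − Σ_A (∂L/∂w^A_c) w^A_a] (J⁻¹)^μ_c det J`
where `w = v·J⁻¹`. -/
theorem stmt_4 {m N : ℕ}
    (L : (Fin m → ℝ) × (Fin N → ℝ) × (Fin N → Fin m → ℝ) → ℝ)
    (hL : ContDiff ℝ 1 L)
    (b : Fin m → ℝ) (y : Fin N → ℝ) (v : Fin N → Fin m → ℝ)
    (f : (Fin m → Fin m → ℝ) → ℝ)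
    (hf : ∀ J : Fin m → Fin m → ℝ,
      f J = L (b, y, fun A c => ∑ μ : Fin m, v A μ * (Matrix.of J)⁻¹ μ c) * (Matrix.of J).det)
    (J : Fin m → Fin m → ℝ) (hJ : (Matrix.of J).det ≠ 0)
    (w : Fin N → Fin m → ℝ)
    (hw : w = fun A c => ∑ μ : Fin m, v A μ * (Matrix.of J)⁻¹ μ c) :
    DifferentiableAt ℝ f J ∧
      ∀ (a μ : Fin m),
        fderiv ℝ f J (Pi.single a (Pi.single μ 1))
          = ∑ c : Fin m,
              (L (b, y, w) * (if c = a then (1 : ℝ) else 0)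
                  - ∑ A : Fin N,
                      fderiv ℝ L (b, y, w) (0, 0, Pi.single A (Pi.single c 1)) * w A a)
                * (Matrix.of J)⁻¹ μ c * (Matrix.of J).det := by
  classical
  haveI : CompleteSpace (Matrix (Fin m) (Fin m) ℝ) := FiniteDimensional.complete ℝ _
  -- the identity continuous linear equivalence with the matrix space
  let eL : (Fin m → Fin m → ℝ) ≃ₗ[ℝ] Matrix (Fin m) (Fin m) ℝ :=
    { Matrix.of with map_add' := fun _ _ => rfl, map_smul' := fun _ _ => rfl }
  let e : (Fin m → Fin m → ℝ) ≃L[ℝ] Matrix (Fin m) (Fin m) ℝ := eL.toContinuousLinearEquiv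
  -- multiplication by `v` on the left, as a continuous linear map
  let lvL : Matrix (Fin m) (Fin m) ℝ →ₗ[ℝ] (Fin N → Fin m → ℝ) :=
    { toFun := fun M A c => ∑ ν : Fin m, v A ν * M ν c
      map_add' := by
        intro M₁ M₂; funext A c
        simp [Matrix.add_apply, mul_add, Finset.sum_add_distrib]
      map_smul' := by
        intro r M; funext A c
        simp [Matrix.smul_apply, Finset.mul_sum]
        ring_nf
        simp [mul_comm, mul_left_comm] }
  let lv : Matrix (Fin m) (Fin m) ℝ →L[ℝ] (Fin N → Fin m → ℝ) :=
    LinearMap.toContinuousLinearMap lvL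
  -- J as a unit
  have hU : IsUnit (Matrix.of J) := (Matrix.isUnit_iff_isUnit_det _).2 hJ.isUnit
  obtain ⟨u, hu⟩ := hU
  have hui : (↑u⁻¹ : Matrix (Fin m) (Fin m) ℝ) = (Matrix.of J)⁻¹ := by
    rw [Matrix.coe_units_inv, hu]
  -- derivative of the matrix inverse
  have hinv : HasFDerivAt (Ring.inverse : Matrix (Fin m) (Fin m) ℝ → _)
      (-ContinuousLinearMap.mulLeftRight ℝ _ ((Matrix.of J)⁻¹) ((Matrix.of J)⁻¹)) (Matrix.of J) := by
    have := hasFDerivAt_ringInverse (𝕜 := ℝ) u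
    rwa [hu, hui] at this
  have heq : ∀ K : Fin m → Fin m → ℝ,
      lv (Ring.inverse (e K)) = fun A c => ∑ ν : Fin m, v A ν * (Matrix.of K)⁻¹ ν c := by
    intro K
    have : Ring.inverse (e K) = (Matrix.of K)⁻¹ := (Matrix.nonsing_inv_eq_ringInverse _).symm
    rw [this]; rfl
  have hwW : lv (Ring.inverse (e J)) = w := by rw [heq, hw]
  -- derivative of `K ↦ v * K⁻¹`
  have hW : HasFDerivAt (fun K : Fin m → Fin m → ℝ => lv (Ring.inverse (e K)))
      ((lv.comp ((-ContinuousLinearMap.mulLeftRight ℝ _ ((Matrix.of J)⁻¹)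
        ((Matrix.of J)⁻¹)).comp (e : (Fin m → Fin m → ℝ) →L[ℝ] Matrix (Fin m) (Fin m) ℝ)))) J :=
    lv.hasFDerivAt.comp J (hinv.comp (f := ⇑e) J (e.hasFDerivAt))
  set DW := (lv.comp ((-ContinuousLinearMap.mulLeftRight ℝ _ ((Matrix.of J)⁻¹)
        ((Matrix.of J)⁻¹)).comp (e : (Fin m → Fin m → ℝ) →L[ℝ] Matrix (Fin m) (Fin m) ℝ))) with hDWdef
  -- derivative of `K ↦ (b, y, v * K⁻¹)`
  have hby : HasFDerivAt
      (fun K : Fin m → Fin m → ℝ =>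
        ((b, y, lv (Ring.inverse (e K))) : (Fin m → ℝ) × (Fin N → ℝ) × (Fin N → Fin m → ℝ)))
      ((0 : _ →L[ℝ] (Fin m → ℝ)).prod (((0 : _ →L[ℝ] (Fin N → ℝ))).prod DW)) J :=
    HasFDerivAt.prodMk (hasFDerivAt_const b J) (HasFDerivAt.prodMk (hasFDerivAt_const y J) hW)
  set DL := fderiv ℝ L (b, y, w) with hDLdef
  have hLd : HasFDerivAt L DL (b, y, lv (Ring.inverse (e J))) := by
    rw [hwW]
    exact (hL.differentiable one_ne_zero (b, y, w)).hasFDerivAt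
  have hLW : HasFDerivAt
      (fun K : Fin m → Fin m → ℝ => L (b, y, lv (Ring.inverse (e K))))
      (DL.comp ((0 : _ →L[ℝ] (Fin m → ℝ)).prod (((0 : _ →L[ℝ] (Fin N → ℝ))).prod DW))) J :=
    hLd.comp J hby
  have hdet : HasFDerivAt (fun K : Fin m → Fin m → ℝ => (Matrix.of K).det)
      ((detCM m).linearDeriv J) J := (detCM m).hasFDerivAt J
  have hfe : f = fun K : Fin m → Fin m → ℝ =>
      L (b, y, lv (Ring.inverse (e K))) * (Matrix.of K).det := by
    funext K; rw [hf K, heq K]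
  have hF : HasFDerivAt f
      (L (b, y, lv (Ring.inverse (e J))) • (detCM m).linearDeriv J +
        (Matrix.of J).det •
          (DL.comp ((0 : _ →L[ℝ] (Fin m → ℝ)).prod (((0 : _ →L[ℝ] (Fin N → ℝ))).prod DW)))) J := by
    rw [hfe]
    exact hLW.mul hdet
  refine ⟨hF.differentiableAt, ?_⟩
  intro a μ
  rw [hF.fderiv]
  have hdetE : (detCM m).linearDeriv J (Pi.single a (Pi.single μ 1))
      = (Matrix.of J).det * (Matrix.of J)⁻¹ μ a := by
    rw [ContinuousMultilinearMap.linearDeriv_apply]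
    rw [Finset.sum_eq_single a]
    · rw [Pi.single_eq_same]
      have h1 : detCM m (Function.update J a (Pi.single μ 1))
          = ((Matrix.of J).updateRow a (Pi.single μ 1)).det := rfl
      have h2 : (Matrix.of J)⁻¹ μ a
          = Ring.inverse (Matrix.of J).det * (Matrix.of J).adjugate μ a := by
        rw [Matrix.inv_def]; rfl
      rw [h1, ← Matrix.adjugate_apply, h2, Ring.inverse_eq_inv']
      field_simp
    · intro i _ hia
      rw [Pi.single_eq_of_ne hia]
      exact (detCM m).map_update_zero J i
    · intro h; exact absurd (Finset.mem_univ a) h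
  have hDWE : ∀ A c, DW (Pi.single a (Pi.single μ 1)) A c
      = -(w A a * (Matrix.of J)⁻¹ μ c) := by
    intro A c
    have h1 : DW (Pi.single a (Pi.single μ 1))
        = lv (-((Matrix.of J)⁻¹ * Matrix.of (Pi.single a (Pi.single μ 1)) * (Matrix.of J)⁻¹)) :=
      rfl
    rw [h1, map_neg]
    have h2 : (-(lv ((Matrix.of J)⁻¹ * Matrix.of (Pi.single a (Pi.single μ 1)) * (Matrix.of J)⁻¹)))
          A c
        = -(∑ ν : Fin m, v A ν *
            (((Matrix.of J)⁻¹ * Matrix.of (Pi.single a (Pi.single μ 1)) * (Matrix.of J)⁻¹ :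
              Matrix (Fin m) (Fin m) ℝ)) ν c) :=
      rfl
    rw [h2, neg_inj]
    have h3 : ∀ ν : Fin m,
        (((Matrix.of J)⁻¹ * Matrix.of (Pi.single a (Pi.single μ 1)) * (Matrix.of J)⁻¹ :
            Matrix (Fin m) (Fin m) ℝ)) ν c
          = (Matrix.of J)⁻¹ ν a * (Matrix.of J)⁻¹ μ c := by
      intro ν
      simp [Matrix.mul_apply, Matrix.of_apply, Pi.single_apply, ite_apply, Pi.zero_apply,
        ite_mul, mul_ite, mul_zero, zero_mul, mul_one, Finset.sum_ite_eq, Finset.sum_ite_eq']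
    simp only [h3]
    have hwa : w A a = ∑ ν : Fin m, v A ν * (Matrix.of J)⁻¹ ν a := by rw [hw]
    rw [hwa, Finset.sum_mul]
    exact Finset.sum_congr rfl fun ν _ => by ring
  have hsum : ((0 : Fin m → ℝ), (0 : Fin N → ℝ), DW (Pi.single a (Pi.single μ 1)))
      = ∑ A : Fin N, ∑ c : Fin m, DW (Pi.single a (Pi.single μ 1)) A c •
          (((0 : Fin m → ℝ), (0 : Fin N → ℝ), Pi.single A (Pi.single c 1)) :
            (Fin m → ℝ) × (Fin N → ℝ) × (Fin N → Fin m → ℝ)) := by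
    refine Prod.ext ?_ (Prod.ext ?_ ?_)
    · simp [Prod.fst_sum]
    · simp [Prod.fst_sum, Prod.snd_sum]
    · simp only [Prod.snd_sum]
      funext A' c'
      simp [Finset.sum_apply, ite_apply, Pi.single_apply, Pi.smul_apply, smul_eq_mul,
        Pi.zero_apply, mul_ite, ite_mul, mul_one, mul_zero, zero_mul,
        Finset.sum_ite_eq, Finset.sum_ite_eq']
  have hDLE : DL ((0 : Fin m → ℝ), (0 : Fin N → ℝ), DW (Pi.single a (Pi.single μ 1)))
      = ∑ A : Fin N, ∑ c : Fin m, DW (Pi.single a (Pi.single μ 1)) A c *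
          DL (0, 0, Pi.single A (Pi.single c 1)) := by
    rw [hsum, map_sum]
    refine Finset.sum_congr rfl fun A _ => ?_
    rw [map_sum]
    refine Finset.sum_congr rfl fun c _ => ?_
    rw [map_smul, smul_eq_mul]
  simp only [ContinuousLinearMap.add_apply, ContinuousLinearMap.smul_apply,
    ContinuousLinearMap.coe_comp', Function.comp_apply, ContinuousLinearMap.prod_apply,
    ContinuousLinearMap.zero_apply, hwW, smul_eq_mul]
  rw [hdetE, hDLE]
  simp only [hDWE]
  rw [Finset.sum_comm]
  simp only [sub_mul, Finset.sum_sub_distrib, Finset.sum_mul, Finset.mul_sum]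
  have hterm : ∀ (x : Fin m) (i : Fin N),
      (Matrix.of J).det * (-(w i a * (Matrix.of J)⁻¹ μ x) * DL (0, 0, Pi.single i (Pi.single x 1)))
        = -(DL (0, 0, Pi.single i (Pi.single x 1)) * w i a * (Matrix.of J)⁻¹ μ x *
            (Matrix.of J).det) := by
    intro x i; ring
  simp only [hterm, Finset.sum_neg_distrib]
  have hfirst : (∑ x : Fin m,
      (L (b, y, w) * if x = a then (1:ℝ) else 0) * (Matrix.of J)⁻¹ μ x * (Matrix.of J).det)
        = L (b, y, w) * (Matrix.of J)⁻¹ μ a * (Matrix.of J).det := by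
    rw [Finset.sum_eq_single a]
    · simp
    · intro x _ hx; simp [hx]
    · intro h; exact absurd (Finset.mem_univ a) h
  rw [hfirst]
  ring

end Aux
end
end

section
/- Let L : ℝ × ℝ^n × ℝ^n → ℝ, written L(T,q,u), be smooth; let T : ℝ → ℝ be smooth with Ṫ(t) ≠ 0 for all t, and q : ℝ → ℝ^n smooth. Along (T,q) write Λ(t) := (T(t), q(t), q̇(t)/Ṫ(t)). If q satisfies the Euler–Lagrange equations of the reparametrized Lagrangian L̃(t) := L(Λ(t))·Ṫ(t) with respect to q, i.e. (∂L/∂q^A)(Λ(t))·Ṫ(t) − (d/dt)[(∂L/∂u^A)(Λ(t))] = 0 for all A and t, then the Euler–Lagrange equation of L̃ with respect to the covariance field T is identically satisfied: (∂L/∂T)(Λ(t))·Ṫ(t) − (d/dt)[ L(Λ(t)) − Σ_A (∂L/∂u^A)(Λ(t))·(q̇^A(t)/Ṫ(t)) ] = 0 for all t ∈ ℝ. -/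
noncomputable section

/-- on shell for `q`, the Euler–Lagrange equation of the reparametrized
mechanics Lagrangian `L̃ = L(Λ(t))·Ṫ(t)` with respect to the covariance field `T`,
namely `(∂L/∂T)(Λ)·Ṫ − d/dt[L(Λ) − Σ_A (∂L/∂u^A)(Λ)·(q̇^A/Ṫ)] = 0`, is identically
satisfied. -/
theorem stmt_8 {n : ℕ}
    (L : ℝ × (Fin n → ℝ) × (Fin n → ℝ) → ℝ) (hL : ContDiff ℝ (⊤ : ℕ∞) L)
    (T : ℝ → ℝ) (hT : ContDiff ℝ (⊤ : ℕ∞) T) (hT' : ∀ t : ℝ, deriv T t ≠ 0)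
    (q : ℝ → (Fin n → ℝ)) (hq : ContDiff ℝ (⊤ : ℕ∞) q)
    (hEL : ∀ (A : Fin n) (t : ℝ),
        fderiv ℝ L (T t, q t, fun B => deriv q t B / deriv T t) (0, Pi.single A 1, 0)
            * deriv T t
          - deriv (fun t' =>
              fderiv ℝ L (T t', q t', fun B => deriv q t' B / deriv T t')
                (0, 0, Pi.single A 1)) t = 0)
    (t : ℝ) :
    fderiv ℝ L (T t, q t, fun B => deriv q t B / deriv T t) (1, 0, 0) * deriv T t
      - deriv (fun t' =>
          L (T t', q t', fun B => deriv q t' B / deriv T t')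
            - ∑ A : Fin n,
                fderiv ℝ L (T t', q t', fun B => deriv q t' B / deriv T t')
                    (0, 0, Pi.single A 1)
                  * (deriv q t' A / deriv T t')) t = 0 := by
  classical
  -- abbreviations
  set Λ : ℝ → ℝ × (Fin n → ℝ) × (Fin n → ℝ) :=
    fun t' => (T t', q t', fun B => deriv q t' B / deriv T t') with hΛdef
  have hdT : ContDiff ℝ (⊤ : ℕ∞) (deriv T) := (contDiff_infty_iff_deriv.mp hT).2
  have hdq : ContDiff ℝ (⊤ : ℕ∞) (deriv q) := (contDiff_infty_iff_deriv.mp hq).2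
  have hu : ContDiff ℝ (⊤ : ℕ∞) (fun t' => (fun B => deriv q t' B / deriv T t')) := by
    refine contDiff_pi.mpr fun B => ContDiff.div ?_ hdT hT'
    exact (contDiff_pi.mp hdq B)
  have hΛ : ContDiff ℝ (⊤ : ℕ∞) Λ := hT.prodMk (hq.prodMk hu)
  -- momenta
  set p : Fin n → ℝ → ℝ := fun A t' => fderiv ℝ L (Λ t') (0, 0, Pi.single A 1) with hpdef
  have hfd : ContDiff ℝ (⊤ : ℕ∞) (fderiv ℝ L) := hL.fderiv_right (m := ((⊤ : ℕ∞) : WithTop ℕ∞)) (by exact_mod_cast le_top)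
  have hp : ∀ A, ContDiff ℝ (⊤ : ℕ∞) (p A) := fun A =>
    ContDiff.clm_apply (hfd.comp hΛ) contDiff_const
  -- derivatives
  have hTd : HasDerivAt T (deriv T t) t := (hT.differentiable (by simp) t).hasDerivAt
  have hqd : HasDerivAt q (deriv q t) t := (hq.differentiable (by simp) t).hasDerivAt
  set w : Fin n → ℝ := deriv (fun t' => (fun B => deriv q t' B / deriv T t')) t with hwdef
  have hud : HasDerivAt (fun t' => (fun B => deriv q t' B / deriv T t')) w t :=
    (hu.differentiable (by simp) t).hasDerivAt
  have hΛd : HasDerivAt Λ (deriv T t, deriv q t, w) t := hTd.prodMk (hqd.prodMk hud)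
  set f := fderiv ℝ L (Λ t) with hfdef
  have hLΛ : HasDerivAt (fun t' => L (Λ t')) (f (deriv T t, deriv q t, w)) t :=
    (hL.differentiable (by simp) (Λ t)).hasFDerivAt.comp_hasDerivAt t hΛd
  have hpd : ∀ A, HasDerivAt (p A) (deriv (p A) t) t := fun A =>
    (((hp A).differentiable (by simp)) t).hasDerivAt
  have huA : ∀ A : Fin n, HasDerivAt (fun t' => deriv q t' A / deriv T t') (w A) t := by
    intro A
    have := (ContinuousLinearMap.proj (R := ℝ) (φ := fun _ : Fin n => ℝ)
      A).hasFDerivAt.comp_hasDerivAt t hud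
    exact this
  -- the total derivative of the energy-like term
  have hsum : HasDerivAt
      (fun t' => ∑ A : Fin n, p A t' * (deriv q t' A / deriv T t'))
      (∑ A : Fin n, (deriv (p A) t * (deriv q t A / deriv T t) + p A t * w A)) t :=
    HasDerivAt.fun_sum fun A _ => (hpd A).mul (huA A)
  have hΦ : HasDerivAt
      (fun t' => L (Λ t') - ∑ A : Fin n, p A t' * (deriv q t' A / deriv T t'))
      (f (deriv T t, deriv q t, w)
        - ∑ A : Fin n, (deriv (p A) t * (deriv q t A / deriv T t) + p A t * w A)) t :=
    hLΛ.sub hsum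
  have hderiv : deriv (fun t' =>
          L (T t', q t', fun B => deriv q t' B / deriv T t')
            - ∑ A : Fin n,
                fderiv ℝ L (T t', q t', fun B => deriv q t' B / deriv T t')
                    (0, 0, Pi.single A 1)
                  * (deriv q t' A / deriv T t')) t
      = f (deriv T t, deriv q t, w)
        - ∑ A : Fin n, (deriv (p A) t * (deriv q t A / deriv T t) + p A t * w A) :=
    hΦ.deriv
  rw [hderiv]
  -- decompose the linear map applied to the velocity vector
  have hdecomp : ∀ (a : ℝ) (v c : Fin n → ℝ),
      f (a, v, c) = a * f (1, 0, 0)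
        + ∑ A : Fin n, v A * f (0, Pi.single A 1, 0)
        + ∑ A : Fin n, c A * f (0, 0, Pi.single A 1) := by
    intro a v c
    have h1 : (a, v, c)
        = a • ((1 : ℝ), (0 : Fin n → ℝ), (0 : Fin n → ℝ))
          + (∑ A : Fin n, v A • ((0 : ℝ), (Pi.single A 1 : Fin n → ℝ), (0 : Fin n → ℝ)))
          + ∑ A : Fin n, c A • ((0 : ℝ), (0 : Fin n → ℝ), (Pi.single A 1 : Fin n → ℝ)) := by
      refine Prod.ext ?_ (Prod.ext ?_ ?_)
      · simp [Prod.fst_sum]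
      · simp [Prod.fst_sum, Prod.snd_sum, ← Pi.single_smul, Finset.univ_sum_single]
      · simp [Prod.fst_sum, Prod.snd_sum, ← Pi.single_smul, Finset.univ_sum_single]
    rw [h1]
    simp only [map_add, map_sum, map_smul, smul_eq_mul]
  rw [hdecomp (deriv T t) (deriv q t) w]
  -- on shell, the momentum derivative is the force
  have hEL' : ∀ A : Fin n, deriv (p A) t = f (0, Pi.single A 1, 0) * deriv T t := by
    intro A
    have h := hEL A t
    have : f (0, Pi.single A 1, 0) * deriv T t - deriv (p A) t = 0 := h
    linarith
  have hcancel : ∀ A : Fin n,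
      deriv (p A) t * (deriv q t A / deriv T t) + p A t * w A
        = deriv q t A * f (0, Pi.single A 1, 0) + w A * f (0, 0, Pi.single A 1) := by
    intro A
    rw [hEL' A, hpdef]
    have h0 : deriv T t ≠ 0 := hT' t
    field_simp
    ring
  rw [Finset.sum_congr rfl fun A _ => hcancel A, Finset.sum_add_distrib]
  ring
end
end

section
/- Let L : ℝ × ℝ^n × ℝ^n → ℝ, written L(T,q,u), be smooth; let T : ℝ → ℝ be smooth with Ṫ(t) ≠ 0 for all t, q : ℝ → ℝ^n smooth, and define the reparametrized Lagrangian density coefficient L̃[T,q](t) := L(T(t), q(t), q̇(t)/Ṫ(t))·Ṫ(t). Then for every smooth diffeomorphism σ : ℝ → ℝ and every t ∈ ℝ, L̃[T∘σ⁻¹, q∘σ⁻¹](σ(t)) · σ′(t) = L̃[T,q](t); that is, the covariantized mechanics Lagrangian density is invariant under time reparametrization. -/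
noncomputable section

/-- The covariantized mechanics Lagrangian density coefficient
`L̃[T,q](t) = L(T(t), q(t), q̇(t)/Ṫ(t))·Ṫ(t)`. -/
def covMech {n : ℕ} (L : ℝ × (Fin n → ℝ) × (Fin n → ℝ) → ℝ)
    (T : ℝ → ℝ) (q : ℝ → (Fin n → ℝ)) (t : ℝ) : ℝ :=
  L (T t, q t, fun A => deriv q t A / deriv T t) * deriv T t

/-- the covariantized mechanics Lagrangian density is invariant under time
reparametrization: `L̃[T∘σ⁻¹, q∘σ⁻¹](σ(t))·σ′(t) = L̃[T,q](t)`. -/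
theorem stmt_10 {n : ℕ}
    (L : ℝ × (Fin n → ℝ) × (Fin n → ℝ) → ℝ) (hL : ContDiff ℝ (⊤ : ℕ∞) L)
    (T : ℝ → ℝ) (hT : ContDiff ℝ (⊤ : ℕ∞) T) (hT' : ∀ t : ℝ, deriv T t ≠ 0)
    (q : ℝ → (Fin n → ℝ)) (hq : ContDiff ℝ (⊤ : ℕ∞) q)
    (σ σinv : ℝ → ℝ) (hσ : ContDiff ℝ (⊤ : ℕ∞) σ) (hσinv : ContDiff ℝ (⊤ : ℕ∞) σinv)
    (hσ1 : Function.LeftInverse σinv σ) (hσ2 : Function.RightInverse σinv σ)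
    (hσ' : ∀ t : ℝ, deriv σ t ≠ 0)
    (t : ℝ) :
    covMech L (T ∘ σinv) (q ∘ σinv) (σ t) * deriv σ t = covMech L T q t := by
  have hσd : HasDerivAt σ (deriv σ t) t :=
    ((hσ.differentiable (by simp)) t).hasDerivAt
  have hσinvd : HasDerivAt σinv (deriv σinv (σ t)) (σ t) :=
    ((hσinv.differentiable (by simp)) (σ t)).hasDerivAt
  have hcomp : HasDerivAt (σinv ∘ σ) (deriv σinv (σ t) * deriv σ t) t :=
    hσinvd.comp t hσd
  have hid : HasDerivAt (σinv ∘ σ) 1 t := by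
    have : (σinv ∘ σ) = id := funext hσ1
    rw [this]; exact hasDerivAt_id t
  have hone : deriv σinv (σ t) * deriv σ t = 1 := hcomp.unique hid
  have hc : deriv σinv (σ t) = (deriv σ t)⁻¹ := eq_inv_of_mul_eq_one_left hone
  have hTd : HasDerivAt T (deriv T t) (σinv (σ t)) := by
    rw [hσ1 t]; exact ((hT.differentiable (by simp)) t).hasDerivAt
  have hTc : HasDerivAt (T ∘ σinv) (deriv T t * (deriv σ t)⁻¹) (σ t) := by
    have := hTd.comp (σ t) hσinvd
    rwa [hc] at this
  have hqd : HasDerivAt q (deriv q t) (σinv (σ t)) := by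
    rw [hσ1 t]; exact ((hq.differentiable (by simp)) t).hasDerivAt
  have hqc : HasDerivAt (q ∘ σinv) ((deriv σ t)⁻¹ • deriv q t) (σ t) := by
    have := hqd.scomp (σ t) hσinvd
    rwa [hc] at this
  unfold covMech
  rw [hTc.deriv, hqc.deriv]
  have harg : (fun A => ((deriv σ t)⁻¹ • deriv q t) A / (deriv T t * (deriv σ t)⁻¹))
      = fun A => deriv q t A / deriv T t := by
    funext A
    simp only [Pi.smul_apply, smul_eq_mul]
    rw [mul_comm (deriv T t), mul_div_mul_left _ _ (inv_ne_zero (hσ' t))]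
  rw [Function.comp_apply, Function.comp_apply, hσ1 t, harg]
  rw [mul_assoc, mul_assoc, inv_mul_cancel₀ (hσ' t), mul_one]
end
end

section
/- (Minimal coupling identity.) Let L : ℝ^m × ℝ^n × (ℝ^n)^m → ℝ, written L(x, y, v) with v = (v_1, …, v_m), v_μ ∈ ℝ^n, be continuous. Let η : ℝ^m → GL(n, ℝ) be continuously differentiable and φ : ℝ^m → ℝ^n continuously differentiable, and suppose L is invariant under the pointwise action of the values of η: for every x ∈ ℝ^m, y ∈ ℝ^n, v ∈ (ℝ^n)^m, L(x, η(x)·y, (η(x)·v_1, …, η(x)·v_m)) = L(x, y, v). Then for every x ∈ ℝ^m, L( x, η(x)φ(x), (∂_1(ηφ)(x), …, ∂_m(ηφ)(x)) ) = L( x, φ(x), (∂_1φ(x) + A_1(x)φ(x), …, ∂_mφ(x) + A_m(x)φ(x)) ), where A_μ(x) := η(x)⁻¹ ∂_μ η(x) and (ηφ)(x) := η(x)·φ(x). -/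
noncomputable section

/-- Entrywise partial derivative `∂_μ η` of a matrix-valued map `η : ℝ^m → M_{n×n}(ℝ)`. -/
def dmat {m n : ℕ} (η : (Fin m → ℝ) → Matrix (Fin n) (Fin n) ℝ) (μ : Fin m)
    (x : Fin m → ℝ) : Matrix (Fin n) (Fin n) ℝ :=
  Matrix.of fun i j => fderiv ℝ (fun z => η z i j) x (Pi.single μ 1)

/-- minimal coupling identity: if `L(x,y,v)` is invariant under the
pointwise action of the values of `η : ℝ^m → GL(n,ℝ)`, then
`L(x, η(x)φ(x), ∂_μ(ηφ)(x)) = L(x, φ(x), ∂_μφ(x) + A_μ(x)φ(x))`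
where `A_μ = η⁻¹ ∂_μ η`. -/
theorem stmt_18 {m n : ℕ}
    (L : (Fin m → ℝ) × (Fin n → ℝ) × (Fin m → Fin n → ℝ) → ℝ) (hL : Continuous L)
    (η : (Fin m → ℝ) → Matrix (Fin n) (Fin n) ℝ)
    (hη : ∀ i j : Fin n, ContDiff ℝ 1 fun x => η x i j)
    (hunit : ∀ x : Fin m → ℝ, IsUnit (η x))
    (φ : (Fin m → ℝ) → (Fin n → ℝ)) (hφ : ContDiff ℝ 1 φ)
    (hinv : ∀ (x : Fin m → ℝ) (y : Fin n → ℝ) (v : Fin m → Fin n → ℝ),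
      L (x, (η x).mulVec y, fun μ => (η x).mulVec (v μ)) = L (x, y, v))
    (x : Fin m → ℝ) :
    L (x, (η x).mulVec (φ x),
        fun μ => fderiv ℝ (fun z => (η z).mulVec (φ z)) x (Pi.single μ 1))
      = L (x, φ x,
          fun μ => fderiv ℝ φ x (Pi.single μ 1) + ((η x)⁻¹ * dmat η μ x).mulVec (φ x)) := by
  have hdet : IsUnit (η x).det := (Matrix.isUnit_iff_isUnit_det _).mp (hunit x)
  have hcancel : η x * (η x)⁻¹ = 1 := Matrix.mul_nonsing_inv _ hdet
  have hηd : ∀ i j, DifferentiableAt ℝ (fun z => η z i j) x :=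
    fun i j => ((hη i j).differentiable one_ne_zero) x
  have hφd : DifferentiableAt ℝ φ x := (hφ.differentiable one_ne_zero) x
  have hφdj : ∀ j, DifferentiableAt ℝ (fun z => φ z j) x := fun j =>
    ((ContinuousLinearMap.proj j : (Fin n → ℝ) →L[ℝ] ℝ).differentiableAt).comp x hφd
  -- fderiv of coordinate of φ
  have hφcoord : ∀ j (e : Fin m → ℝ), fderiv ℝ φ x e j = fderiv ℝ (fun z => φ z j) x e := by
    intro j e
    have : fderiv ℝ (fun z => φ z j) x =
        (ContinuousLinearMap.proj j : (Fin n → ℝ) →L[ℝ] ℝ).comp (fderiv ℝ φ x) :=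
      ((ContinuousLinearMap.proj j : (Fin n → ℝ) →L[ℝ] ℝ).hasFDerivAt.comp x
        hφd.hasFDerivAt).fderiv
    rw [this]; rfl
  have hentry : ∀ i, DifferentiableAt ℝ (fun z => (η z).mulVec (φ z) i) x := by
    intro i
    simp only [Matrix.mulVec, dotProduct]
    exact DifferentiableAt.fun_sum fun j _ => (hηd i j).mul (hφdj j)
  have key : ∀ μ,
      (η x).mulVec (fderiv ℝ φ x (Pi.single μ 1) + ((η x)⁻¹ * dmat η μ x).mulVec (φ x))
        = fderiv ℝ (fun z => (η z).mulVec (φ z)) x (Pi.single μ 1) := by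
    intro μ
    set e : Fin m → ℝ := Pi.single μ 1
    rw [Matrix.mulVec_add, Matrix.mulVec_mulVec, ← mul_assoc, hcancel, one_mul]
    have hfd : fderiv ℝ (fun z => (η z).mulVec (φ z)) x =
        ContinuousLinearMap.pi fun i => fderiv ℝ (fun z => (η z).mulVec (φ z) i) x := by
      exact fderiv_pi hentry
    funext i
    have : fderiv ℝ (fun z => (η z).mulVec (φ z)) x e i
        = fderiv ℝ (fun z => (η z).mulVec (φ z) i) x e := by rw [hfd]; rfl
    rw [Pi.add_apply, this]
    have hrw : (fun z => (η z).mulVec (φ z) i) = fun z => ∑ j, η z i j * φ z j := by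
      funext z; simp [Matrix.mulVec, dotProduct]
    rw [hrw]
    rw [fderiv_fun_sum (fun j _ => (hηd i j).fun_mul (hφdj j))]
    simp only [ContinuousLinearMap.sum_apply]
    have : ∀ j, fderiv ℝ (fun z => η z i j * φ z j) x e
        = η x i j * fderiv ℝ (fun z => φ z j) x e + φ x j * fderiv ℝ (fun z => η z i j) x e := by
      intro j
      rw [fderiv_fun_mul (hηd i j) (hφdj j)]
      simp [mul_comm]
    rw [Finset.sum_congr rfl fun j _ => this j, Finset.sum_add_distrib]
    simp only [Matrix.mulVec, dotProduct, Matrix.add_apply, dmat, Matrix.of_apply]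
    congr 1
    · exact Finset.sum_congr rfl fun j _ => by rw [hφcoord j e]
    · exact Finset.sum_congr rfl fun j _ => by ring
  calc L (x, (η x).mulVec (φ x),
        fun μ => fderiv ℝ (fun z => (η z).mulVec (φ z)) x (Pi.single μ 1))
      = L (x, (η x).mulVec (φ x), fun μ => (η x).mulVec
          (fderiv ℝ φ x (Pi.single μ 1) + ((η x)⁻¹ * dmat η μ x).mulVec (φ x))) := by
        have h : (fun μ => fderiv ℝ (fun z => (η z).mulVec (φ z)) x (Pi.single μ 1))
            = fun μ => (η x).mulVec
              (fderiv ℝ φ x (Pi.single μ 1) + ((η x)⁻¹ * dmat η μ x).mulVec (φ x)) :=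
          funext fun μ => (key μ).symm
        rw [h]
    _ = _ := hinv x (φ x) _
end
end
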